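/- For a symmetric positive semidefinite n×n matrix M and 1 ≤ k ≤ n, the sum of the k largest eigenvalues of M equals the maximum of tr(MX) over symmetric matrices X with 0 ⪯ X ⪯ I and tr(X) = k. -/

import Mathlib

open Matrix Finset

private lemma kyFan_card_topk {n k : ℕ} (hk1 : 1 ≤ k) (hkn : k ≤ n) :
    (Finset.univ.filter (fun i : Fin n => n - k ≤ (i : ℕ))).card = k := by
  have h : n - k < n := by omega
  have : (Finset.univ.filter (fun i : Fin n => n - k ≤ (i : ℕ))) = Finset.Ici (⟨n - k, h⟩ : Fin n) := by
    ext i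
    simp [Fin.le_def]
  rw [this, Fin.card_Ici]
  simp only [Fin.val_mk]
  omega

private lemma kyFan_diag_nonneg {n : ℕ} {Y : Matrix (Fin n) (Fin n) ℝ} (hY : Y.PosSemidef)
    (i : Fin n) : 0 ≤ Y i i := by
  exact hY.diag_nonneg

private lemma kyFan_sum_bound {n k : ℕ} (hk1 : 1 ≤ k) (hkn : k ≤ n)
    (μ y : Fin n → ℝ) (hmono : Monotone μ)
    (hy0 : ∀ i, 0 ≤ y i) (hy1 : ∀ i, y i ≤ 1) (hsum : ∑ i, y i = (k : ℝ)) :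
    ∑ i, μ i * y i ≤ ∑ i ∈ Finset.univ.filter (fun i : Fin n => n - k ≤ (i : ℕ)), μ i := by
  have hnk : n - k < n := by omega
  set a : Fin n := ⟨n - k, hnk⟩ with ha
  set t : ℝ := μ a with htdef
  have key : ∀ i : Fin n, μ i * y i ≤ t * y i + (if n - k ≤ (i : ℕ) then μ i - t else 0) := by
    intro i
    by_cases hi : n - k ≤ (i : ℕ)
    · simp only [hi, if_pos]
      have hμi : t ≤ μ i := hmono (by simpa [ha, Fin.le_def] using hi)
      nlinarith [hy1 i, hy0 i]
    · simp only [hi, if_neg, not_false_iff]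
      have hμi : μ i ≤ t := hmono (by simp [ha, Fin.le_def]; omega)
      nlinarith [hy0 i]
  calc ∑ i, μ i * y i ≤ ∑ i, (t * y i + (if n - k ≤ (i : ℕ) then μ i - t else 0)) :=
        Finset.sum_le_sum (fun i _ => key i)
    _ = t * (∑ i, y i) + ∑ i ∈ Finset.univ.filter (fun i : Fin n => n - k ≤ (i : ℕ)), (μ i - t) := by
        rw [Finset.sum_add_distrib, Finset.mul_sum, Finset.sum_filter]
    _ = ∑ i ∈ Finset.univ.filter (fun i : Fin n => n - k ≤ (i : ℕ)), μ i := by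
        rw [hsum, Finset.sum_sub_distrib, Finset.sum_const, kyFan_card_topk hk1 hkn]
        ring

/-- Ky Fan: for a symmetric PSD matrix `M`, the sum of the `k` largest eigenvalues equals
the maximum of `tr(MX)` over symmetric `X` with `0 ⪯ X ⪯ I` and `tr X = k`. -/
theorem kyFan_sum_largest_eigenvalues
    {n : ℕ} (M : Matrix (Fin n) (Fin n) ℝ) (hM : M.PosSemidef)
    (k : ℕ) (hk1 : 1 ≤ k) (hkn : k ≤ n)
    (μ : Fin n → ℝ) (hmono : Monotone μ)
    (σ : Equiv.Perm (Fin n)) (hμ : μ = hM.1.eigenvalues ∘ σ) :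
    IsGreatest
      {t : ℝ | ∃ X : Matrix (Fin n) (Fin n) ℝ,
        X.PosSemidef ∧ (1 - X).PosSemidef ∧ X.trace = (k : ℝ) ∧ t = (M * X).trace}
      (∑ i ∈ Finset.univ.filter (fun i : Fin n => n - k ≤ (i : ℕ)), μ i) := by
  classical
  set V : Matrix (Fin n) (Fin n) ℝ := (hM.1.eigenvectorUnitary : Matrix (Fin n) (Fin n) ℝ) with hV
  set d : Fin n → ℝ := hM.1.eigenvalues with hd
  have hVV : V * Vᴴ = 1 := by
    rw [← star_eq_conjTranspose]
    exact (Matrix.mem_unitaryGroup_iff).mp hM.1.eigenvectorUnitary.2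
  have hVV' : Vᴴ * V = 1 := by
    rw [← star_eq_conjTranspose]
    exact (Matrix.mem_unitaryGroup_iff').mp hM.1.eigenvectorUnitary.2
  have hspec : M = V * Matrix.diagonal d * Vᴴ := by
    have := hM.1.spectral_theorem
    simp [← star_eq_conjTranspose] at this
    rw [this, star_eq_conjTranspose]
  constructor
  · -- membership: X = V * diagonal c * Vᴴ
    set c : Fin n → ℝ := fun j => if n - k ≤ ((σ.symm j : Fin n) : ℕ) then 1 else 0 with hc
    refine ⟨V * Matrix.diagonal c * Vᴴ, ?_, ?_, ?_, ?_⟩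
    · exact (PosSemidef.diagonal (fun j => by
        simp only [Pi.zero_apply, hc]; split <;> norm_num)).mul_mul_conjTranspose_same V
    · have h1 : (1 : Matrix (Fin n) (Fin n) ℝ) - V * Matrix.diagonal c * Vᴴ
          = V * Matrix.diagonal (fun j => 1 - c j) * Vᴴ := by
        have : Matrix.diagonal (fun j => 1 - c j) = 1 - Matrix.diagonal c := by
          rw [← Matrix.diagonal_one, ← Matrix.diagonal_sub]
        rw [this, Matrix.mul_sub, Matrix.mul_one, Matrix.sub_mul, hVV]
      rw [h1]
      exact (PosSemidef.diagonal (fun j : Fin n => by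
        show (0:ℝ) ≤ 1 - c j
        simp only [hc]; split <;> norm_num)).mul_mul_conjTranspose_same V
    · have h2 : ∀ i : Fin n, c (σ i) = if n - k ≤ (i : ℕ) then (1 : ℝ) else 0 := by
        intro i; simp [hc]
      rw [Matrix.trace_mul_cycle, hVV', Matrix.one_mul, Matrix.trace_diagonal]
      rw [← Equiv.sum_comp σ c]
      simp_rw [h2]
      rw [← Finset.sum_filter, Finset.sum_const, kyFan_card_topk hk1 hkn]
      simp
    · rw [hspec]
      have hMX : (V * Matrix.diagonal d * Vᴴ) * (V * Matrix.diagonal c * Vᴴ)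
          = V * (Matrix.diagonal d * Matrix.diagonal c) * Vᴴ := by
        simp only [Matrix.mul_assoc]
        rw [← Matrix.mul_assoc Vᴴ V, hVV', Matrix.one_mul]
      rw [hMX, Matrix.trace_mul_cycle, hVV', Matrix.one_mul,
        Matrix.diagonal_mul_diagonal, Matrix.trace_diagonal]
      rw [← Equiv.sum_comp σ (fun j => d j * c j)]
      have h2 : ∀ i : Fin n, c (σ i) = if n - k ≤ (i : ℕ) then (1 : ℝ) else 0 := by
        intro i; simp [hc]
      have h3 : ∀ i : Fin n, d (σ i) * c (σ i) = if n - k ≤ (i : ℕ) then μ i else 0 := by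
        intro i
        rw [h2, hμ]
        by_cases h : n - k ≤ (i : ℕ)
        · rw [if_pos h, if_pos h]; simp
        · rw [if_neg h, if_neg h]; simp
      simp_rw [h3]
      rw [← Finset.sum_filter]
  · -- upper bound
    rintro t ⟨X, hX, hIX, htr, rfl⟩
    set Y : Matrix (Fin n) (Fin n) ℝ := Vᴴ * X * V with hY
    have hYpsd : Y.PosSemidef := hX.conjTranspose_mul_mul_same V
    have hIYpsd : ((1 : Matrix (Fin n) (Fin n) ℝ) - Y).PosSemidef := by
      have : (1 : Matrix (Fin n) (Fin n) ℝ) - Y = Vᴴ * (1 - X) * V := by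
        rw [Matrix.mul_sub, Matrix.mul_one, Matrix.sub_mul, hVV', hY]
      rw [this]
      exact hIX.conjTranspose_mul_mul_same V
    have htrY : Y.trace = (k : ℝ) := by
      rw [hY, Matrix.trace_mul_cycle, hVV, Matrix.one_mul, htr]
    have htrMX : (M * X).trace = ∑ j, d j * Y j j := by
      rw [hspec, Matrix.mul_assoc (V * Matrix.diagonal d) Vᴴ X, Matrix.trace_mul_comm,
        ← Matrix.mul_assoc (Vᴴ * X) V (Matrix.diagonal d), Matrix.trace_mul_comm,
        ← hY]
      simp [Matrix.trace, Matrix.diag, Matrix.diagonal_mul]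
    rw [htrMX]
    have hsum : ∑ i, Y (σ i) (σ i) = (k : ℝ) := by
      rw [← htrY]
      exact Equiv.sum_comp σ (fun j => Y j j)
    have := kyFan_sum_bound hk1 hkn μ (fun i => Y (σ i) (σ i)) hmono
      (fun i => kyFan_diag_nonneg hYpsd (σ i))
      (fun i => by
        have := kyFan_diag_nonneg hIYpsd (σ i)
        simp only [Matrix.sub_apply, Matrix.one_apply_eq] at this
        linarith)
      hsum
    calc ∑ j, d j * Y j j = ∑ i, μ i * Y (σ i) (σ i) := by
          rw [← Equiv.sum_comp σ (fun j => d j * Y j j)]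
          exact Finset.sum_congr rfl (fun i _ => by rw [hμ]; rfl)
      _ ≤ _ := this
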